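/- Non-attacking reduction for signed flagged row LLT polynomials with empty marking: for an r-partial d-Dyck path π (over variables x_1,…,x_M), the signed flagged row LLT polynomial G^±_r(π, ∅) equals (1−t)^{d−r} times the sum Σ_T t^{inv(T)} x^T over non-attacking flagged (π,∅)-row semistandard words T with positive entries, i.e., words T: {1,…,d} → {1,…,M} with T(i) ≤ i for i ≤ r and T(i) ≠ T(j) for all (i,j) ∈ Area(π), where inv(T) = #{(i,j) ∈ Area(π) : T(j) ≤ T(i)}. -/

import Mathlib

noncomputable section

open MvPolynomial

/- An `r`-partial `d`-Dyck path is encoded by the columns of the north steps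
of `N^r π`: a monotone `γ : Fin d → ℕ` with `γ j ≤ j` and `γ j = 0` for
`j < r`.  In 0-based coordinates, `(i, j) ∈ Area(π)` iff `i < j` and
`γ j ≤ i`.

The super alphabet `𝒜 = {1 < 1̄ < 2 < 2̄ < ⋯ < M < M̄}` is encoded as
`Fin M × Bool`, where the `Bool` records whether the letter is barred
(negative); `|(v, b)| = v`. -/

/-- The coefficient ring `ℚ[t]` and polynomial ring in `x_1, …, x_M`. -/
abbrev RM (M : ℕ) : Type := MvPolynomial (Fin M) (Polynomial ℚ)

/-- The parameter `t`. -/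
def tq {M : ℕ} : RM M := C Polynomial.X

/-- `Area(π)`. -/
def area (d : ℕ) (γ : Fin d → ℕ) : Finset (Fin d × Fin d) :=
  Finset.univ.filter fun p => (p.1 : ℕ) < (p.2 : ℕ) ∧ γ p.2 ≤ (p.1 : ℕ)

/-- The strict order on the super alphabet:
`1 < 1̄ < 2 < 2̄ < ⋯` (unbarred before barred of the same value). -/
abbrev Llt {M : ℕ} (a b : Fin M × Bool) : Prop :=
  a.1 < b.1 ∨ (a.1 = b.1 ∧ a.2 = false ∧ b.2 = true)

/-- The pair of letters `a b` is row-increasing: `a < b`, or `a = b` both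
unbarred. -/
abbrev RowInc {M : ℕ} (a b : Fin M × Bool) : Prop :=
  Llt a b ∨ (a = b ∧ a.2 = false)

/-- `T` is a flagged `(π, ∅)`-row super word: `T i ≤ i` (as letters, with `i`
the unbarred letter `i`, 1-based) for the first `r` positions. -/
abbrev IsFlaggedSuperWord (M d r : ℕ) (T : Fin d → Fin M × Bool) : Prop :=
  ∀ i : Fin d, (i : ℕ) < r →
    ((T i).1 : ℕ) < (i : ℕ) ∨ (((T i).1 : ℕ) = (i : ℕ) ∧ (T i).2 = false)

/-- `inv(T)` for a super word:
`#{(i,j) ∈ Area(π) : T(j) T(i) is row-increasing}`. -/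
def invS {M d : ℕ} (γ : Fin d → ℕ) (T : Fin d → Fin M × Bool) : ℕ :=
  ((area d γ).filter fun p => RowInc (T p.2) (T p.1)).card

/-- The number of barred (negative) letters of `T`. -/
def mneg {M d : ℕ} (T : Fin d → Fin M × Bool) : ℕ :=
  (Finset.univ.filter fun i => (T i).2 = true).card

/-- The signed flagged row LLT polynomial `G^±_r(π, ∅)(x_1, …, x_M; t)`. -/
def Gpm (M d r : ℕ) (γ : Fin d → ℕ) : RM M :=
  ∑ T ∈ Finset.univ.filter (IsFlaggedSuperWord M d r),
    tq ^ invS γ T * (-tq) ^ mneg T * ∏ i, X (T i).1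

/-- `inv(T)` for a positive word: `#{(i,j) ∈ Area(π) : T j ≤ T i}`. -/
def invP {M d : ℕ} (γ : Fin d → ℕ) (T : Fin d → Fin M) : ℕ :=
  ((area d γ).filter fun p => T p.2 ≤ T p.1).card

namespace SLLT

variable {M d : ℕ}

lemma mem_area {γ : Fin d → ℕ} {p : Fin d × Fin d} :
    p ∈ area d γ ↔ (p.1 : ℕ) < (p.2 : ℕ) ∧ γ p.2 ≤ (p.1 : ℕ) := by
  simp [area]

lemma rowInc_iff (a b : Fin M) (x y : Bool) :
    RowInc (a, x) (b, y) ↔ a < b ∨ (a = b ∧ x = false) := by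
  cases x <;> cases y <;> simp [RowInc, Llt, Prod.ext_iff] <;> tauto

/-- number of attackers of position `j` -/
def cnt (γ : Fin d → ℕ) (P : Fin d → Fin M) (j : Fin d) : ℕ :=
  ((area d γ).filter fun p => p.2 = j ∧ P p.1 = P p.2).card

def Aof (γ : Fin d → ℕ) (P : Fin d → Fin M) : ℕ :=
  ((area d γ).filter fun p => P p.2 < P p.1).card

lemma invS_split (γ : Fin d → ℕ) (P : Fin d → Fin M) (ε : Fin d → Bool) :
    invS γ (fun i => (P i, ε i)) =
      Aof γ P + ∑ j, (if ε j = false then cnt γ P j else 0) := by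
  unfold invS Aof
  have h1 : ((area d γ).filter fun p =>
      RowInc ((fun i => (P i, ε i)) p.2) ((fun i => (P i, ε i)) p.1)) =
      (area d γ).filter fun p => P p.2 < P p.1 ∨ (P p.2 = P p.1 ∧ ε p.2 = false) := by
    apply Finset.filter_congr
    intro p _
    exact rowInc_iff _ _ _ _
  rw [h1, Finset.filter_or, Finset.card_union_of_disjoint]
  · congr 1
    rw [Finset.card_eq_sum_card_fiberwise (f := Prod.snd) (t := Finset.univ)
      (fun _ _ => Finset.mem_univ _)]
    apply Finset.sum_congr rfl
    intro j _
    rw [Finset.filter_filter]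
    cases hj : ε j with
    | false =>
      simp only [if_true]
      unfold cnt
      congr 1
      apply Finset.filter_congr
      intro p _
      constructor
      · rintro ⟨⟨h1, h2⟩, h3⟩; exact ⟨h3, h1.symm⟩
      · rintro ⟨h3, h1⟩; exact ⟨⟨h1.symm, by rw [h3, hj]⟩, h3⟩
    | true =>
      rw [if_neg (by simp), Finset.card_eq_zero, Finset.filter_eq_empty_iff]
      rintro p _ ⟨⟨_, h2⟩, h3⟩
      rw [h3, hj] at h2
      exact Bool.true_eq_false.mp h2
  · rw [Finset.disjoint_left]
    intro p h1 h2
    rw [Finset.mem_filter] at h1 h2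
    exact absurd h2.2.1 (ne_of_lt h1.2)

def hfun (γ : Fin d → ℕ) (P : Fin d → Fin M) (j : Fin d) (b : Bool) : RM M :=
  if b then -tq else tq ^ cnt γ P j

lemma weight_eq (γ : Fin d → ℕ) (P : Fin d → Fin M) (ε : Fin d → Bool) :
    tq ^ invS γ (fun i => (P i, ε i)) * (-tq) ^ mneg (fun i => (P i, ε i))
      = (tq : RM M) ^ Aof γ P * ∏ j, hfun γ P j (ε j) := by
  rw [invS_split, pow_add]
  have hm : mneg (M := M) (fun i => (P i, ε i)) = ∑ j, (if ε j = true then 1 else 0) := by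
    unfold mneg
    rw [Finset.card_filter]
  rw [hm, ← Finset.prod_pow_eq_pow_sum, ← Finset.prod_pow_eq_pow_sum, mul_assoc,
    ← Finset.prod_mul_distrib]
  congr 1
  apply Finset.prod_congr rfl
  intro j _
  cases hj : ε j <;> simp [hfun, hj]

def Bset (r : ℕ) (P : Fin d → Fin M) (j : Fin d) : Finset Bool :=
  if (j : ℕ) < r then
    (if (P j : ℕ) < (j : ℕ) then Finset.univ
     else if (P j : ℕ) = (j : ℕ) then {false} else ∅)
  else Finset.univ

lemma flag_iff (r : ℕ) (P : Fin d → Fin M) (ε : Fin d → Bool) :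
    IsFlaggedSuperWord M d r (fun i => (P i, ε i)) ↔ ∀ j, ε j ∈ Bset r P j := by
  unfold IsFlaggedSuperWord Bset
  constructor
  · intro h j
    by_cases hj : (j : ℕ) < r
    · rw [if_pos hj]
      rcases h j hj with h' | ⟨h1, h2⟩
      · rw [if_pos h']; exact Finset.mem_univ _
      · have h1' : (P j : ℕ) = (j : ℕ) := h1
        have h2' : ε j = false := h2
        rw [if_neg (by omega), if_pos h1']
        simp [h2']
    · rw [if_neg hj]; exact Finset.mem_univ _
  · intro h i hi
    have hh := h i
    rw [if_pos hi] at hh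
    by_cases h1 : (P i : ℕ) < (i : ℕ)
    · exact Or.inl h1
    · rw [if_neg h1] at hh
      by_cases h2 : (P i : ℕ) = (i : ℕ)
      · rw [if_pos h2] at hh
        simp only [Finset.mem_singleton] at hh
        exact Or.inr ⟨h2, hh⟩
      · rw [if_neg h2] at hh
        exact absurd hh (Finset.notMem_empty _)

def Sfac (r : ℕ) (γ : Fin d → ℕ) (P : Fin d → Fin M) (j : Fin d) : RM M :=
  ∑ b ∈ Bset r P j, hfun γ P j b

lemma inner_sum (r : ℕ) (γ : Fin d → ℕ) (P : Fin d → Fin M) :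
    (∑ ε : Fin d → Bool,
      if IsFlaggedSuperWord M d r (fun i => (P i, ε i)) then
        tq ^ invS γ (fun i => (P i, ε i)) * (-tq) ^ mneg (fun i => (P i, ε i))
      else 0)
      = tq ^ Aof γ P * ∏ j, Sfac r γ P j := by
  have h1 : ∀ ε : Fin d → Bool,
      (if IsFlaggedSuperWord M d r (fun i => (P i, ε i)) then
        tq ^ invS γ (fun i => (P i, ε i)) * (-tq) ^ mneg (fun i => (P i, ε i))
      else 0)
      = (if ε ∈ Fintype.piFinset (fun j => Bset r P j) then
          (tq : RM M) ^ Aof γ P * ∏ j, hfun γ P j (ε j) else 0) := by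
    intro ε
    rw [weight_eq]
    congr 1
    simp only [Fintype.mem_piFinset]
    rw [eq_iff_iff]
    exact flag_iff r P ε
  rw [Finset.sum_congr rfl (fun ε _ => h1 ε)]
  rw [Finset.sum_ite_mem, Finset.univ_inter, ← Finset.mul_sum]
  simp only [Sfac]
  rw [Finset.prod_univ_sum]


lemma cnt_eq_zero (γ : Fin d → ℕ) (P : Fin d → Fin M)
    (hna : ∀ p ∈ area d γ, P p.1 ≠ P p.2) (j : Fin d) : cnt γ P j = 0 := by
  rw [cnt, Finset.card_eq_zero, Finset.filter_eq_empty_iff]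
  rintro p hp ⟨_, h⟩
  exact hna p hp h

lemma Aof_eq_invP (γ : Fin d → ℕ) (P : Fin d → Fin M)
    (hna : ∀ p ∈ area d γ, P p.1 ≠ P p.2) : Aof γ P = invP γ P := by
  unfold Aof invP
  congr 1
  apply Finset.filter_congr
  intro p hp
  constructor
  · exact le_of_lt
  · exact fun h => lt_of_le_of_ne h (Ne.symm (hna p hp))

lemma forced {r : ℕ} (γ : Fin d → ℕ) (P : Fin d → Fin M)
    (hflag0 : ∀ j : Fin d, (j : ℕ) < r → γ j = 0)
    (hP : ∀ i : Fin d, (i : ℕ) < r → (P i : ℕ) ≤ (i : ℕ))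
    (hna : ∀ p ∈ area d γ, P p.1 ≠ P p.2) :
    ∀ j : Fin d, (j : ℕ) < r → (P j : ℕ) = (j : ℕ) := by
  have main : ∀ n : ℕ, ∀ j : Fin d, (j : ℕ) = n → (j : ℕ) < r → (P j : ℕ) = (j : ℕ) := by
    intro n
    induction n using Nat.strong_induction_on with
    | _ n ih =>
      intro j hjn hjr
      rcases lt_or_eq_of_le (hP j hjr) with hlt | heq
      · exfalso
        have hPd : (P j : ℕ) < d := lt_trans hlt j.isLt
        set i : Fin d := ⟨(P j : ℕ), hPd⟩ with hi
        have hir : (i : ℕ) < r := lt_trans hlt hjr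
        have hPi : (P i : ℕ) = (i : ℕ) := ih (i : ℕ) (show (P j : ℕ) < n by omega) i rfl hir
        have hPP : P i = P j := Fin.val_injective (by rw [hPi])
        apply hna (i, j) _ hPP
        exact mem_area.mpr ⟨hlt, by rw [hflag0 j hjr]; exact Nat.zero_le _⟩
      · exact heq
  exact fun j => main (j : ℕ) j rfl

lemma prod_Sfac_good {r : ℕ} (hrd : r ≤ d) (γ : Fin d → ℕ) (P : Fin d → Fin M)
    (hflag0 : ∀ j : Fin d, (j : ℕ) < r → γ j = 0)
    (hP : ∀ i : Fin d, (i : ℕ) < r → (P i : ℕ) ≤ (i : ℕ))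
    (hna : ∀ p ∈ area d γ, P p.1 ≠ P p.2) :
    ∏ j, Sfac r γ P j = (1 - tq) ^ (d - r) := by
  have hforced := forced γ P hflag0 hP hna
  have h1 : ∀ j : Fin d, Sfac r γ P j = (if (j : ℕ) < r then 1 else (1 - tq)) := by
    intro j
    by_cases hjr : (j : ℕ) < r
    · rw [if_pos hjr]
      have hpj := hforced j hjr
      rw [Sfac, Bset, if_pos hjr, if_neg (by omega), if_pos hpj,
        Finset.sum_singleton, hfun]
      simp [cnt_eq_zero γ P hna j]
    · rw [if_neg hjr]
      rw [Sfac, Bset, if_neg hjr, Fintype.sum_bool, hfun, hfun]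
      simp only [if_pos, if_neg Bool.false_ne_true, cnt_eq_zero γ P hna j, pow_zero]
      ring
  rw [Finset.prod_congr rfl (fun j _ => h1 j), Finset.prod_ite,
    Finset.prod_const_one, one_mul, Finset.prod_const]
  congr 1
  rw [Finset.filter_not, Finset.card_sdiff_of_subset (Finset.filter_subset _ _),
    Finset.card_univ, Fintype.card_fin]
  have h2 : (Finset.univ.filter fun x : Fin d => (x : ℕ) < r).card = (Finset.range r).card := by
    refine Finset.card_bij (fun j _ => (j : ℕ)) ?_ ?_ ?_
    · intro a ha; rw [Finset.mem_range]; exact (Finset.mem_filter.mp ha).2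
    · intro a _ b _ h; exact Fin.val_injective h
    · intro b hb
      rw [Finset.mem_range] at hb
      exact ⟨⟨b, lt_of_lt_of_le hb hrd⟩, Finset.mem_filter.mpr ⟨Finset.mem_univ _, hb⟩, rfl⟩
  rw [h2, Finset.card_range]

lemma prod_Sfac_zero_notflag {r : ℕ} (γ : Fin d → ℕ) (P : Fin d → Fin M)
    (h : ¬ ∀ i : Fin d, (i : ℕ) < r → (P i : ℕ) ≤ (i : ℕ)) :
    ∏ j, Sfac r γ P j = 0 := by
  push_neg at h
  obtain ⟨i, hir, hgt⟩ := h
  apply Finset.prod_eq_zero (Finset.mem_univ i)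
  rw [Sfac, Bset, if_pos hir, if_neg (by omega), if_neg (by omega), Finset.sum_empty]

lemma prod_Sfac_zero_attack {r : ℕ} (γ : Fin d → ℕ) (hmono : Monotone γ)
    (P : Fin d → Fin M)
    (hP : ∀ i : Fin d, (i : ℕ) < r → (P i : ℕ) ≤ (i : ℕ))
    (h : ∃ p ∈ area d γ, P p.1 = P p.2) :
    ∏ j, Sfac r γ P j = 0 := by
  classical
  obtain ⟨p, hp, hpe⟩ := h
  have hne : (Finset.univ.filter
      (fun j : Fin d => ∃ i : Fin d, (i, j) ∈ area d γ ∧ P i = P j)).Nonempty :=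
    ⟨p.2, Finset.mem_filter.mpr ⟨Finset.mem_univ _, ⟨p.1, hp, hpe⟩⟩⟩
  obtain ⟨j, hjmem, hjmin⟩ := Finset.exists_min_image _ id hne
  obtain ⟨i0, hi0area, hi0eq⟩ := (Finset.mem_filter.mp hjmem).2
  have hmin : ∀ k : Fin d, (∃ i : Fin d, (i, k) ∈ area d γ ∧ P i = P k) → j ≤ k :=
    fun k hk => hjmin k (Finset.mem_filter.mpr ⟨Finset.mem_univ _, hk⟩)
  have hi0lt : (i0 : ℕ) < (j : ℕ) := (mem_area.mp hi0area).1
  have hi0γ : γ j ≤ (i0 : ℕ) := (mem_area.mp hi0area).2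
  have hcnt : cnt γ P j = 1 := by
    rw [cnt, Finset.card_eq_one]
    refine ⟨(i0, j), ?_⟩
    ext q
    simp only [Finset.mem_filter, Finset.mem_singleton]
    constructor
    · rintro ⟨hqa, hq2, hqe⟩
      have hq1lt : (q.1 : ℕ) < (j : ℕ) := by
        have := (mem_area.mp hqa).1; rw [hq2] at this; exact this
      have hqγ : γ j ≤ (q.1 : ℕ) := by
        have := (mem_area.mp hqa).2; rw [hq2] at this; exact this
      have hq1 : q.1 = i0 := by
        by_contra hne1
        rcases lt_or_gt_of_ne hne1 with hlt | hgt
        · -- q.1 < i0 : then i0 is attacked, i0 < j, contradiction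
          have hmem : ((q.1, i0) : Fin d × Fin d) ∈ area d γ :=
            mem_area.mpr ⟨hlt, le_trans (hmono (Fin.le_def.mpr (Nat.le_of_lt hi0lt))) hqγ⟩
          have : j ≤ i0 := hmin i0 ⟨q.1, hmem, by rw [hqe, hq2, hi0eq]⟩
          have : (j : ℕ) ≤ (i0 : ℕ) := this
          omega
        · -- i0 < q.1 : then q.1 is attacked, q.1 < j, contradiction
          have hmem : ((i0, q.1) : Fin d × Fin d) ∈ area d γ :=
            mem_area.mpr ⟨hgt, le_trans (hmono (Fin.le_def.mpr (Nat.le_of_lt hq1lt))) hi0γ⟩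
          have : j ≤ q.1 := hmin q.1 ⟨i0, hmem, by rw [hi0eq, hqe, hq2]⟩
          have : (j : ℕ) ≤ (q.1 : ℕ) := this
          omega
      exact Prod.ext hq1 hq2
    · rintro rfl
      exact ⟨hi0area, rfl, hi0eq⟩
  have hB : Bset r P j = Finset.univ := by
    rw [Bset]
    by_cases hjr : (j : ℕ) < r
    · rw [if_pos hjr]
      have hle : (P j : ℕ) ≤ (j : ℕ) := hP j hjr
      have hne2 : (P j : ℕ) ≠ (j : ℕ) := by
        intro heq
        have h1 : (P i0 : ℕ) = (j : ℕ) := by rw [hi0eq, heq]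
        have h2 : (P i0 : ℕ) ≤ (i0 : ℕ) := hP i0 (lt_trans hi0lt hjr)
        omega
      rw [if_pos (by omega)]
    · rw [if_neg hjr]
  apply Finset.prod_eq_zero (Finset.mem_univ j)
  rw [Sfac, hB, Fintype.sum_bool, hfun, hfun, hcnt]
  simp

end SLLT

/-- non-attacking reduction for signed flagged row LLT
polynomials with empty marking:
`G^±_r(π, ∅) = (1-t)^{d-r} · ∑_T t^{inv(T)} x^T`, the sum over non-attacking
flagged `(π, ∅)`-row semistandard words with positive entries (`T i ≤ i`,
1-based, for `i ≤ r`, and `T i ≠ T j` for all `(i, j) ∈ Area(π)`). -/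
theorem signed_LLT_nonattacking (M d r : ℕ) (hrd : r ≤ d) (γ : Fin d → ℕ)
    (hmono : Monotone γ) (hdiag : ∀ j : Fin d, γ j ≤ (j : ℕ))
    (hflag : ∀ j : Fin d, (j : ℕ) < r → γ j = 0) :
    Gpm M d r γ =
      (1 - tq) ^ (d - r) *
        ∑ T ∈ Finset.univ.filter (fun T : Fin d → Fin M =>
            (∀ i : Fin d, (i : ℕ) < r → (T i : ℕ) ≤ (i : ℕ)) ∧
            ∀ p ∈ area d γ, T p.1 ≠ T p.2),
          tq ^ invP γ T * ∏ i, X (T i) := by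
  classical
  set F : (Fin d → Fin M × Bool) → RM M := fun T =>
    if IsFlaggedSuperWord M d r T then
      tq ^ invS γ T * (-tq) ^ mneg T * ∏ i, X (T i).1
    else 0 with hF
  have h0 : Gpm M d r γ = ∑ T, F T := by rw [Gpm, Finset.sum_filter]
  have h1 : ∑ T, F T =
      ∑ q : (Fin d → Fin M) × (Fin d → Bool), F (fun i => (q.1 i, q.2 i)) :=
    (Fintype.sum_equiv (Equiv.arrowProdEquivProdArrow (Fin d) (fun _ => Fin M) (fun _ => Bool)).symm
      (fun q => F (fun i => (q.1 i, q.2 i))) F (fun q => rfl)).symm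
  rw [h0, h1, Fintype.sum_prod_type]
  rw [Finset.sum_filter, Finset.mul_sum]
  apply Finset.sum_congr rfl
  intro P _
  have hx : ∀ ε : Fin d → Bool, F (fun i => (P i, ε i)) =
      (if IsFlaggedSuperWord M d r (fun i => (P i, ε i)) then
        tq ^ invS γ (fun i => (P i, ε i)) * (-tq) ^ mneg (fun i => (P i, ε i))
      else 0) * ∏ i, X (P i) := by
    intro ε
    simp only [hF]
    by_cases hfl : IsFlaggedSuperWord M d r (fun i => (P i, ε i))
    · rw [if_pos hfl, if_pos hfl]
    · rw [if_neg hfl, if_neg hfl, zero_mul]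
  rw [Finset.sum_congr rfl (fun ε _ => hx ε), ← Finset.sum_mul, SLLT.inner_sum]
  by_cases hc : (∀ i : Fin d, (i : ℕ) < r → (P i : ℕ) ≤ (i : ℕ)) ∧
      ∀ p ∈ area d γ, P p.1 ≠ P p.2
  · rw [if_pos hc, SLLT.prod_Sfac_good hrd γ P hflag hc.1 hc.2,
      SLLT.Aof_eq_invP γ P hc.2]
    ring
  · rw [if_neg hc, mul_zero]
    have hz : ∏ j, SLLT.Sfac r γ P j = 0 := by
      by_cases hfl : ∀ i : Fin d, (i : ℕ) < r → (P i : ℕ) ≤ (i : ℕ)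
      · apply SLLT.prod_Sfac_zero_attack γ hmono P hfl
        by_contra hno
        push_neg at hno
        exact hc ⟨hfl, hno⟩
      · exact SLLT.prod_Sfac_zero_notflag γ P hfl
    rw [hz, mul_zero, zero_mul]


end
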